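/- Suppose τ₀, τ₁, τ₂ ∈ H satisfy ⟨τ₀,τ₀⟩ = ⟨τ₁,τ₁⟩ = ⟨τ₂,τ₂⟩ = 1/3, τ₂ = ω τ₁, and ⟨Φ₀₀, Φ₀₁⟩ = 0. Then ⟨τ₀, τ₁⟩ = −ω/6 and ⟨τ₀, τ₂⟩ = −ω²/6. -/

import Mathlib

open scoped BigOperators ComplexConjugate

variable {H : Type*} [NormedAddCommGroup H] [InnerProductSpace ℂ H]

/-- The primitive cube root of unity `ω = e^{2πi/3}`. -/
noncomputable def ω : ℂ := Complex.exp (2 * Real.pi * Complex.I / 3)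

/-- `|v_j⟩ = (1/√3)(i|0⟩ + ω^{-j}|1⟩ + ω^{-2j}|2⟩)` in `ℂ³`. -/
noncomputable def v (j : Fin 3) : Fin 3 → ℂ := fun k =>
  ((Real.sqrt 3 : ℂ))⁻¹ * (if k = 0 then Complex.I else ω ^ (-((j : ℕ) * (k : ℕ) : ℤ)))

/-- `|v_j'⟩ = (1/√3)(|0⟩ + ω^{-j}|1⟩ + i ω^{-2j}|2⟩)` in `ℂ³`. -/
noncomputable def v' (j : Fin 3) : Fin 3 → ℂ := fun k =>
  ((Real.sqrt 3 : ℂ))⁻¹ * (if k = 2 then Complex.I else 1) * ω ^ (-((j : ℕ) * (k : ℕ) : ℤ))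

/-- The inner product on `ℂ³ ⊗ H`, viewed as triples of elements of `H`:
`⟨x, y⟩ = ∑ₖ ⟨xₖ, yₖ⟩` (conjugate-linear in the first argument). -/
noncomputable def ip (x y : Fin 3 → H) : ℂ := ∑ k, (inner ℂ (x k) (y k) : ℂ)

/-- `Φ₀₀ = √2 [ |v₀⟩⊗τ₀ − ½|v₁⟩⊗τ₁ − ½|v₂⟩⊗τ₂ ]` in `ℂ³ ⊗ H`. -/
noncomputable def Phi00 (τ₀ τ₁ τ₂ : H) : Fin 3 → H := fun k =>
  (Real.sqrt 2 : ℂ) • (v 0 k • τ₀ - ((1/2 : ℂ) * v 1 k) • τ₁ - ((1/2 : ℂ) * v 2 k) • τ₂)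

/-- `Φ₀₁ = √2 [ −(√3/2)|v₁'⟩⊗τ₁ + (√3/2)|v₂'⟩⊗τ₂ ]` in `ℂ³ ⊗ H`. -/
noncomputable def Phi01 (τ₁ τ₂ : H) : Fin 3 → H := fun k =>
  (Real.sqrt 2 : ℂ) • ((-((Real.sqrt 3 : ℂ) / 2) * v' 1 k) • τ₁ +
    (((Real.sqrt 3 : ℂ) / 2) * v' 2 k) • τ₂)

/-- `Φ₁₀ = √2 [ (√3/2)|v₁⟩⊗τ₁ − (√3/2)|v₂⟩⊗τ₂ ]` in `ℂ³ ⊗ H`. -/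
noncomputable def Phi10 (τ₁ τ₂ : H) : Fin 3 → H := fun k =>
  (Real.sqrt 2 : ℂ) • ((((Real.sqrt 3 : ℂ) / 2) * v 1 k) • τ₁ -
    (((Real.sqrt 3 : ℂ) / 2) * v 2 k) • τ₂)

/-- `Φ₁₁ = √2 [ |v₀'⟩⊗τ₀ − ½|v₁'⟩⊗τ₁ − ½|v₂'⟩⊗τ₂ ]` in `ℂ³ ⊗ H`. -/
noncomputable def Phi11 (τ₀ τ₁ τ₂ : H) : Fin 3 → H := fun k =>
  (Real.sqrt 2 : ℂ) • (v' 0 k • τ₀ - ((1/2 : ℂ) * v' 1 k) • τ₁ - ((1/2 : ℂ) * v' 2 k) • τ₂)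

private theorem tz_omega_val : ω = (-1 + (Real.sqrt 3 : ℂ) * Complex.I) / 2 := by
  have h : (2 * Real.pi * Complex.I / 3) = ((2 * Real.pi / 3 : ℝ) : ℂ) * Complex.I := by
    push_cast; ring
  rw [ω, h, Complex.exp_mul_I, ← Complex.ofReal_cos, ← Complex.ofReal_sin]
  have h1 : (2 * Real.pi / 3 : ℝ) = Real.pi - Real.pi / 3 := by ring
  rw [h1, Real.cos_pi_sub, Real.sin_pi_sub, Real.cos_pi_div_three, Real.sin_pi_div_three]
  push_cast; ring

private theorem tz_omega_cube : ω ^ 3 = 1 := by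
  have hs3 : (Real.sqrt 3 : ℂ) * (Real.sqrt 3 : ℂ) = 3 := by
    rw [← Complex.ofReal_mul, Real.mul_self_sqrt (by norm_num)]; norm_num
  rw [ω, ← Complex.exp_nat_mul]
  have : (3:ℕ) * (2 * (Real.pi:ℂ) * Complex.I / 3) = 2 * Real.pi * Complex.I := by push_cast; ring
  rw [this, Complex.exp_two_pi_mul_I]

example : True := trivial

theorem omega_ne : ω ≠ 0 := Complex.exp_ne_zero _

theorem omega_zpow1 : ω ^ (-1 : ℤ) = ω ^ 2 := by
  rw [zpow_neg, zpow_one]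
  exact inv_eq_of_mul_eq_one_left (by linear_combination tz_omega_cube)

theorem omega_zpow2 : ω ^ (-2 : ℤ) = ω := by
  rw [show (-2:ℤ) = -((2:ℕ):ℤ) by norm_num, zpow_neg, zpow_natCast]
  exact inv_eq_of_mul_eq_one_left (by linear_combination tz_omega_cube)

theorem omega_zpow4 : ω ^ (-4 : ℤ) = ω ^ 2 := by
  rw [show (-4:ℤ) = -((4:ℕ):ℤ) by norm_num, zpow_neg, zpow_natCast]
  exact inv_eq_of_mul_eq_one_left (by linear_combination (ω^3 + 1) * tz_omega_cube)

private theorem tz_omega_inv : ω⁻¹ = ω ^ 2 :=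
  inv_eq_of_mul_eq_one_left (by linear_combination tz_omega_cube)

private theorem tz_omega_sq_inv : (ω ^ 2)⁻¹ = ω :=
  inv_eq_of_mul_eq_one_left (by linear_combination tz_omega_cube)

private theorem tz_omega_pow4 : ω ^ 4 = ω := by linear_combination ω * tz_omega_cube

private theorem tz_conj_omega : (starRingEnd ℂ) ω = ω ^ 2 := by
  rw [ω, ← Complex.exp_conj]
  have : (starRingEnd ℂ) (2 * Real.pi * Complex.I / 3) = -(2 * Real.pi * Complex.I / 3) := by
    simp [map_div₀, Complex.conj_I, map_ofNat]
    ring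
  rw [this, Complex.exp_neg, ← ω, tz_omega_inv]

private theorem tz_key {H : Type*} [NormedAddCommGroup H] [InnerProductSpace ℂ H]
    (τ₀ τ₁ : H) (h1 : (inner ℂ τ₁ τ₁ : ℂ) = 1/3) :
    ip (Phi00 τ₀ τ₁ (ω • τ₁)) (Phi01 τ₁ (ω • τ₁)) =
      (1 + (Real.sqrt 3 : ℂ) * Complex.I) * (inner ℂ τ₀ τ₁ : ℂ) - 1/3 := by
  simp only [ip, Phi00, Phi01, v, v', Fin.sum_univ_three, inner_sub_left, inner_add_right,
    inner_smul_left, inner_smul_right, h1, Fin.reduceEq, Fin.val_zero, Fin.val_one,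
    Fin.val_two, if_true, if_false, reduceIte]
  norm_num
  have hz2 : ∀ z : ℂ, z ^ (2:ℤ) = z^2 := fun z => by
    rw [show (2:ℤ) = ((2:ℕ):ℤ) by norm_num, zpow_natCast]
  have hz4 : ∀ z : ℂ, z ^ (4:ℤ) = z^4 := fun z => by
    rw [show (4:ℤ) = ((4:ℕ):ℤ) by norm_num, zpow_natCast]
  have l1 : ((ω^2)^2)⁻¹ = ω^2 := inv_eq_of_mul_eq_one_left (by linear_combination (ω^3+1) * tz_omega_cube)
  have l2 : ((ω^2)^4)⁻¹ = ω := inv_eq_of_mul_eq_one_left (by linear_combination (ω^6+ω^3+1) * tz_omega_cube)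
  have l3 : (ω^4)⁻¹ = ω^2 := inv_eq_of_mul_eq_one_left (by linear_combination (ω^3+1) * tz_omega_cube)
  have lc2 : (starRingEnd ℂ) (2:ℂ) = 2 := map_ofNat _ 2
  simp only [tz_conj_omega, hz2, hz4, l1, l2, l3, tz_omega_sq_inv, tz_omega_inv, lc2]
  rw [tz_omega_val]
  have hs3 : (Real.sqrt 3 : ℂ) * (Real.sqrt 3 : ℂ) = 3 := by
    rw [← Complex.ofReal_mul, Real.mul_self_sqrt (by norm_num)]; norm_num
  have hs2 : (Real.sqrt 2 : ℂ) * (Real.sqrt 2 : ℂ) = 2 := by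
    rw [← Complex.ofReal_mul, Real.mul_self_sqrt (by norm_num)]; norm_num
  have hs3inv : ((Real.sqrt 3 : ℂ))⁻¹ = (Real.sqrt 3 : ℂ) / 3 :=
    inv_eq_of_mul_eq_one_left (by linear_combination hs3 / 3)
  simp only [hs3inv]
  linear_combination (((-41:ℂ)/2304)*(Real.sqrt 3:ℂ) ^ 3*Complex.I + ((5:ℂ)/48)*(Real.sqrt 3:ℂ) ^ 3*Complex.I*(inner ℂ τ₀ τ₁:ℂ) + ((23:ℂ)/1728)*(Real.sqrt 3:ℂ) ^ 4*Complex.I ^ 2 + ((-5:ℂ)/144)*(Real.sqrt 3:ℂ) ^ 4*Complex.I ^ 2*(inner ℂ τ₀ τ₁:ℂ) + ((-35:ℂ)/6912)*(Real.sqrt 3:ℂ) ^ 5*Complex.I ^ 3 + ((-1:ℂ)/48)*(Real.sqrt 3:ℂ) ^ 5*Complex.I ^ 3*(inner ℂ τ₀ τ₁:ℂ) + ((1:ℂ)/144)*(Real.sqrt 3:ℂ) ^ 6*Complex.I ^ 4*(inner ℂ τ₀ τ₁:ℂ) + ((-1:ℂ)/6912)*(Real.sqrt 3:ℂ) ^ 7*Complex.I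 ^ 5 + ((1:ℂ)/1728)*(Real.sqrt 3:ℂ) ^ 8*Complex.I ^ 6 + ((-1:ℂ)/6912)*(Real.sqrt 3:ℂ) ^ 9*Complex.I ^ 7) * hs2 + (((23:ℂ)/288)*Complex.I ^ 2 + ((-5:ℂ)/24)*Complex.I ^ 2*(inner ℂ τ₀ τ₁:ℂ) + ((1:ℂ)/8)*Complex.I ^ 4*(inner ℂ τ₀ τ₁:ℂ) + ((1:ℂ)/32)*Complex.I ^ 6 + ((-41:ℂ)/1152)*(Real.sqrt 3:ℂ)*Complex.I + ((5:ℂ)/24)*(Real.sqrt 3:ℂ)*Complex.I*(inner ℂ τ₀ τ₁:ℂ) + ((-35:ℂ)/1152)*(Real.sqrt 3:ℂ)*Complex.I ^ 3 + ((-1:ℂ)/8)*(Real.sqrt 3:ℂ)*Complex.I ^ 3*(inner ℂ τ₀ τ₁:ℂ) + ((-1:ℂ)/384)*(Real.sqrt 3:ℂ)*Complex.I ^ 5 + ((-1:ℂ)/128)*(Real.sqrt 3:ℂ)*Complex.I ^ 7 + ((23:ℂ)/864)*(Real.sqrt 3:ℂ) ^ 2*Complex.I ^ 2 + ((-5:ℂ)/72)*(Real.sqrt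 3:ℂ) ^ 2*Complex.I ^ 2*(inner ℂ τ₀ τ₁:ℂ) + ((1:ℂ)/24)*(Real.sqrt 3:ℂ) ^ 2*Complex.I ^ 4*(inner ℂ τ₀ τ₁:ℂ) + ((1:ℂ)/96)*(Real.sqrt 3:ℂ) ^ 2*Complex.I ^ 6 + ((-35:ℂ)/3456)*(Real.sqrt 3:ℂ) ^ 3*Complex.I ^ 3 + ((-1:ℂ)/24)*(Real.sqrt 3:ℂ) ^ 3*Complex.I ^ 3*(inner ℂ τ₀ τ₁:ℂ) + ((-1:ℂ)/1152)*(Real.sqrt 3:ℂ) ^ 3*Complex.I ^ 5 + ((-1:ℂ)/384)*(Real.sqrt 3:ℂ) ^ 3*Complex.I ^ 7 + ((1:ℂ)/72)*(Real.sqrt 3:ℂ) ^ 4*Complex.I ^ 4*(inner ℂ τ₀ τ₁:ℂ) + ((1:ℂ)/288)*(Real.sqrt 3:ℂ) ^ 4*Complex.I ^ 6 + ((-1:ℂ)/3456)*(Real.sqrt 3:ℂ) ^ 5*Complex.I ^ 5 + ((-1:ℂ)/1152)*(Real.sqrt 3:ℂ) ^ 5*Complex.I ^ 7 + ((1:ℂ)/864)*(Real.sqrt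 3:ℂ) ^ 6*Complex.I ^ 6 + ((-1:ℂ)/3456)*(Real.sqrt 3:ℂ) ^ 7*Complex.I ^ 7) * hs3 + (((1:ℂ)/3)*1 + ((-1:ℂ)/1)*(inner ℂ τ₀ τ₁:ℂ) + ((-3:ℂ)/32)*Complex.I ^ 2 + ((3:ℂ)/8)*Complex.I ^ 2*(inner ℂ τ₀ τ₁:ℂ) + ((3:ℂ)/32)*Complex.I ^ 4 + ((-41:ℂ)/384)*(Real.sqrt 3:ℂ)*Complex.I + ((-3:ℂ)/8)*(Real.sqrt 3:ℂ)*Complex.I*(inner ℂ τ₀ τ₁:ℂ) + ((1:ℂ)/64)*(Real.sqrt 3:ℂ)*Complex.I ^ 3 + ((-3:ℂ)/128)*(Real.sqrt 3:ℂ)*Complex.I ^ 5) * Complex.I_sq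

/-- If `⟨τ₀,τ₀⟩ = ⟨τ₁,τ₁⟩ = ⟨τ₂,τ₂⟩ = 1/3`, `τ₂ = ω τ₁` and
`⟨Φ₀₀,Φ₀₁⟩ = 0`, then `⟨τ₀,τ₁⟩ = -ω/6` and `⟨τ₀,τ₂⟩ = -ω²/6`. -/
theorem tau_zero_inner {H : Type*} [NormedAddCommGroup H] [InnerProductSpace ℂ H]
    (τ₀ τ₁ τ₂ : H)
    (h0 : (inner ℂ τ₀ τ₀ : ℂ) = 1/3) (h1 : (inner ℂ τ₁ τ₁ : ℂ) = 1/3)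
    (h2 : (inner ℂ τ₂ τ₂ : ℂ) = 1/3) (h12 : τ₂ = ω • τ₁)
    (horth : ip (Phi00 τ₀ τ₁ τ₂) (Phi01 τ₁ τ₂) = 0) :
    (inner ℂ τ₀ τ₁ : ℂ) = -ω / 6 ∧ (inner ℂ τ₀ τ₂ : ℂ) = -ω ^ 2 / 6 := by
  subst h12
  rw [tz_key τ₀ τ₁ h1] at horth
  have hs3 : (Real.sqrt 3 : ℂ) * (Real.sqrt 3 : ℂ) = 3 := by
    rw [← Complex.ofReal_mul, Real.mul_self_sqrt (by norm_num)]; norm_num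
  have h01 : (inner ℂ τ₀ τ₁ : ℂ) = -ω / 6 := by
    rw [tz_omega_val]
    linear_combination ((1 - (Real.sqrt 3:ℂ) * Complex.I) / 4) * horth +
      ((inner ℂ τ₀ τ₁ : ℂ) * Complex.I ^ 2 / 4) * hs3 +
      ((3:ℂ) * (inner ℂ τ₀ τ₁ : ℂ) / 4) * Complex.I_sq
  refine ⟨h01, ?_⟩
  rw [inner_smul_right, h01]
  ring
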